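/- arXiv:2603.22408 — 2 statements merged into one kernel-verified Lean document; each statement's English description precedes it below -/
import Mathlib

section
/- (Minimum property of cubic splines, de Boor) Given knots a = τ_1 < ... < τ_L = b and values β_1,...,β_L ∈ ℝ, among all functions f ∈ C¹[a,b] with f'' ∈ L²[a,b] satisfying f(τ_ℓ) = β_ℓ for all ℓ, the natural cubic spline interpolant uniquely minimizes ∫_a^b (f''(τ))² dτ. -/
open MeasureTheory Set

section Aux
open Polynomial

lemma fubini_aux {c d : ℝ} {ψ : ℝ → ℝ}
    (hψ : IntegrableOn ψ (Ioc c d)) :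
    ∫ t in Ioc c d, (d - t) * ψ t = ∫ u in Ioc c d, ∫ t in Ioc c u, ψ t := by
  set μ := volume.restrict (Ioc c d) with hμ
  have hψμ : Integrable ψ μ := hψ
  have hsndm : Integrable (fun p : ℝ × ℝ => ψ p.2) (μ.prod μ) := by
    have h1 : Integrable ψ (Measure.map Prod.snd (μ.prod μ)) := by
      rw [Measure.map_snd_prod]
      exact hψμ.smul_measure (measure_ne_top μ _)
    have h2 : AEStronglyMeasurable ψ (Measure.map Prod.snd (μ.prod μ)) := by
      rw [Measure.map_snd_prod]
      exact hψμ.aestronglyMeasurable.smul_measure _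
    exact (integrable_map_measure h2 measurable_snd.aemeasurable).mp h1
  have hSm : MeasurableSet {p : ℝ × ℝ | p.2 ≤ p.1} :=
    measurableSet_le measurable_snd measurable_fst
  have hFint : Integrable ({p : ℝ × ℝ | p.2 ≤ p.1}.indicator (fun p => ψ p.2)) (μ.prod μ) :=
    hsndm.indicator hSm
  have swap := MeasureTheory.integral_integral_swap
    (f := fun u t => {p : ℝ × ℝ | p.2 ≤ p.1}.indicator (fun p : ℝ × ℝ => ψ p.2) (u, t))
    (μ := μ) (ν := μ) hFint
  have hL : (∫ u, ∫ t, {p : ℝ × ℝ | p.2 ≤ p.1}.indicator (fun p : ℝ × ℝ => ψ p.2) (u, t) ∂μ ∂μ)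
      = ∫ u in Ioc c d, ∫ t in Ioc c u, ψ t := by
    rw [hμ]
    apply setIntegral_congr_fun measurableSet_Ioc
    intro u hu
    have : (fun t => {p : ℝ × ℝ | p.2 ≤ p.1}.indicator (fun p : ℝ × ℝ => ψ p.2) (u, t))
        = (Iic u).indicator ψ := by
      ext t
      simp [Set.indicator_apply, Set.mem_setOf_eq]
    dsimp only
    rw [this, integral_indicator measurableSet_Iic, Measure.restrict_restrict measurableSet_Iic]
    congr 1
    rw [Set.Iic_inter_Ioc_of_le hu.2]
  have hR : (∫ t, ∫ u, {p : ℝ × ℝ | p.2 ≤ p.1}.indicator (fun p : ℝ × ℝ => ψ p.2) (u, t) ∂μ ∂μ)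
      = ∫ t in Ioc c d, (d - t) * ψ t := by
    rw [hμ]
    apply setIntegral_congr_fun measurableSet_Ioc
    intro t ht
    have : (fun u => {p : ℝ × ℝ | p.2 ≤ p.1}.indicator (fun p : ℝ × ℝ => ψ p.2) (u, t))
        = (Ici t).indicator (fun _ => ψ t) := by
      ext u
      simp [Set.indicator_apply, Set.mem_setOf_eq]
    dsimp only
    rw [this, integral_indicator measurableSet_Ici, Measure.restrict_restrict measurableSet_Ici,
      setIntegral_const]
    have : Ici t ∩ Ioc c d = Icc t d := by
      ext u
      simp only [mem_inter_iff, mem_Ici, mem_Ioc, mem_Icc]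
      constructor
      · rintro ⟨h1, _, h3⟩; exact ⟨h1, h3⟩
      · rintro ⟨h1, h2⟩; exact ⟨h1, lt_of_lt_of_le ht.1 h1, h2⟩
    rw [this, Real.volume_real_Icc_of_le (by linarith [ht.2] : t ≤ d), smul_eq_mul]
  rw [← hL, ← hR, swap]

lemma bddMul {c d : ℝ} {φ ψ : ℝ → ℝ} (hφ : ContinuousOn φ (Icc c d))
    (hψ : IntegrableOn ψ (Ioc c d)) : IntegrableOn (fun t => φ t * ψ t) (Ioc c d) := by
  obtain ⟨C, hC⟩ := (isCompact_Icc (a := c) (b := d)).exists_bound_of_continuousOn hφ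
  exact Integrable.bdd_mul hψ
    ((hφ.mono Ioc_subset_Icc_self).aestronglyMeasurable measurableSet_Ioc)
    (((ae_restrict_mem measurableSet_Ioc)).mono fun x hx => hC x (Ioc_subset_Icc_self hx))

lemma parts {a b c d e k : ℝ} (hac : a ≤ c) (hcd : c ≤ d) (hdb : d ≤ b)
    {g g' g'' : ℝ → ℝ}
    (hg : ∀ t ∈ Icc a b, HasDerivAt g (g' t) t)
    (hg'cont : ContinuousOn g' (Icc a b))
    (hg' : ∀ t ∈ Icc a b, g' t = g' a + ∫ u in a..t, g'' u)
    (hgint : IntegrableOn g'' (Ioc a b)) :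
    ∫ t in c..d, (e + k * t) * g'' t
      = (e + k * d) * g' d - (e + k * c) * g' c - k * (g d - g c) := by
  have hab : a ≤ b := le_trans hac (le_trans hcd hdb)
  have hIcc : Icc c d ⊆ Icc a b := Icc_subset_Icc hac hdb
  have hIocII : ∀ r t : ℝ, r ∈ Icc a b → t ∈ Icc a b → r ≤ t →
      IntervalIntegrable g'' volume r t := by
    intro r t hr ht hrt
    rw [intervalIntegrable_iff_integrableOn_Ioc_of_le hrt]
    exact hgint.mono_set (Ioc_subset_Ioc hr.1 ht.2)
  have hψ : IntegrableOn g'' (Ioc c d) := hgint.mono_set (Ioc_subset_Ioc hac hdb)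
  have hcmem : c ∈ Icc a b := ⟨hac, le_trans hcd hdb⟩
  have hdmem : d ∈ Icc a b := ⟨le_trans hac hcd, hdb⟩
  have hprim : ∀ r ∈ Icc a b, ∀ t ∈ Icc a b, r ≤ t →
      (∫ u in r..t, g'' u) = g' t - g' r := by
    intro r hr t ht hrt
    have h1 := hg' t ht
    have h2 := hg' r hr
    have hsplit := intervalIntegral.integral_add_adjacent_intervals
      (hIocII a r (left_mem_Icc.mpr hab) hr hr.1) (hIocII r t hr ht hrt)
    rw [h1, h2]; linarith
  have huIcc : uIcc c d ⊆ Icc a b := by rw [uIcc_of_le hcd]; exact hIcc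
  have hg'ii : IntervalIntegrable g' volume c d :=
    (hg'cont.mono huIcc).intervalIntegrable
  have hftc : (∫ u in c..d, g' u) = g d - g c :=
    intervalIntegral.integral_eq_sub_of_hasDerivAt (fun t ht => hg t (huIcc ht)) hg'ii
  have key : (∫ t in Ioc c d, (d - t) * g'' t) = (g d - g c) - g' c * (d - c) := by
    rw [fubini_aux hψ]
    rw [setIntegral_congr_fun measurableSet_Ioc (g := fun u => g' u - g' c)
      (fun u hu => by
        rw [← intervalIntegral.integral_of_le hu.1.le]
        exact hprim c hcmem u ⟨le_trans hac hu.1.le, le_trans hu.2 hdb⟩ hu.1.le)]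
    rw [← intervalIntegral.integral_of_le hcd,
      intervalIntegral.integral_sub hg'ii intervalIntegrable_const, hftc,
      intervalIntegral.integral_const, smul_eq_mul]
    ring
  have haff : ContinuousOn (fun t : ℝ => e + k * t) (Icc c d) := by fun_prop
  have hAii : IntervalIntegrable (fun t => (e + k * t) * g'' t) volume c d := by
    rw [intervalIntegrable_iff_integrableOn_Ioc_of_le hcd]
    exact bddMul haff hψ
  have hBii : IntervalIntegrable (fun t => (d - t) * g'' t) volume c d := by
    rw [intervalIntegrable_iff_integrableOn_Ioc_of_le hcd]
    exact bddMul (by fun_prop) hψ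
  have hCii : IntervalIntegrable (fun t => k * ((d - t) * g'' t)) volume c d :=
    hBii.const_mul k
  have hDii : IntervalIntegrable (fun t => (e + k * d) * g'' t) volume c d :=
    (hIocII c d hcmem hdmem hcd).const_mul _
  have hsplit : (∫ t in c..d, (e + k * t) * g'' t)
      = (∫ t in c..d, (e + k * d) * g'' t) - ∫ t in c..d, k * ((d - t) * g'' t) := by
    rw [← intervalIntegral.integral_sub hDii hCii]
    apply intervalIntegral.integral_congr
    intro t _
    ring
  rw [hsplit, intervalIntegral.integral_const_mul, intervalIntegral.integral_const_mul,
    hprim c hcmem d hdmem hcd, intervalIntegral.integral_of_le hcd, key]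
  ring

lemma spline_affine {c d : ℝ} (hcd : c < d) {s s' s'' : ℝ → ℝ} {p : Polynomial ℝ}
    (hp3 : p.natDegree ≤ 3)
    (hs : ∀ t ∈ Icc c d, HasDerivAt s (s' t) t)
    (hs' : ∀ t ∈ Icc c d, HasDerivAt s' (s'' t) t)
    (hsp : ∀ t ∈ Icc c d, s t = p.eval t) :
    ∀ t ∈ Icc c d, s'' t = (p.derivative.derivative).coeff 0
      + (p.derivative.derivative).coeff 1 * t := by
  have hud := uniqueDiffOn_Icc hcd
  have h1 : ∀ t ∈ Icc c d, s' t = p.derivative.eval t := by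
    intro t ht
    have hA : HasDerivWithinAt (fun x => p.eval x) (s' t) (Icc c d) t :=
      ((hs t ht).hasDerivWithinAt).congr (fun y hy => (hsp y hy).symm) (hsp t ht).symm
    have hB : HasDerivWithinAt (fun x => p.eval x) (p.derivative.eval t) (Icc c d) t :=
      (p.hasDerivAt t).hasDerivWithinAt
    exact (hud t ht).eq_deriv _ hA hB
  have h2 : ∀ t ∈ Icc c d, s'' t = (p.derivative.derivative).eval t := by
    intro t ht
    have hA : HasDerivWithinAt (fun x => p.derivative.eval x) (s'' t) (Icc c d) t :=
      ((hs' t ht).hasDerivWithinAt).congr (fun y hy => (h1 y hy).symm) (h1 t ht).symm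
    have hB : HasDerivWithinAt (fun x => p.derivative.eval x)
        ((p.derivative.derivative).eval t) (Icc c d) t :=
      (p.derivative.hasDerivAt t).hasDerivWithinAt
    exact (hud t ht).eq_deriv _ hA hB
  intro t ht
  rw [h2 t ht]
  have hq1 : (p.derivative.derivative).natDegree ≤ 1 := by
    have a1 := natDegree_derivative_le p.derivative
    have a2 := natDegree_derivative_le p
    omega
  conv_lhs => rw [eq_X_add_C_of_natDegree_le_one hq1]
  simp only [eval_add, eval_mul, eval_C, eval_X]
  ring

end Aux

/-- The admissible class F₂[a,b]: f ∈ C¹[a,b] with f' absolutely continuous and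
weak second derivative f'' ∈ L²[a,b]. -/
def Admissible (a b : ℝ) (f f' f'' : ℝ → ℝ) : Prop :=
  ContinuousOn f (Icc a b) ∧ ContinuousOn f' (Icc a b) ∧
  (∀ t ∈ Icc a b, HasDerivAt f (f' t) t) ∧
  (∀ t ∈ Icc a b, f' t = f' a + ∫ u in a..t, f'' u) ∧
  MemLp f'' 2 (volume.restrict (Icc a b))

/-- A natural cubic spline with (0-based) knots τ_0 < ... < τ_{L-1}: a C² function which is a
cubic polynomial on each knot interval, with vanishing second derivative at both endpoints. -/
def NatCubicSpline (L : ℕ) (τ : ℕ → ℝ) (s s' s'' : ℝ → ℝ) : Prop :=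
  (∀ t ∈ Icc (τ 0) (τ (L - 1)), HasDerivAt s (s' t) t) ∧
  (∀ t ∈ Icc (τ 0) (τ (L - 1)), HasDerivAt s' (s'' t) t) ∧
  ContinuousOn s'' (Icc (τ 0) (τ (L - 1))) ∧
  (∀ ℓ, ℓ < L - 1 → ∃ p : Polynomial ℝ, p.natDegree ≤ 3 ∧
      ∀ t ∈ Icc (τ ℓ) (τ (ℓ + 1)), s t = p.eval t) ∧
  s'' (τ 0) = 0 ∧ s'' (τ (L - 1)) = 0

/-- Minimum property of natural cubic splines (de Boor): among all f ∈ F₂[a,b] interpolating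
the values β_ℓ at the knots, the natural cubic spline interpolant uniquely minimizes
∫_a^b (f'')². -/
theorem stmt4 (L : ℕ) (hL : 2 ≤ L) (τ β : ℕ → ℝ)
    (hτ : ∀ ℓ, ℓ < L - 1 → τ ℓ < τ (ℓ + 1))
    (s s' s'' : ℝ → ℝ)
    (hs : NatCubicSpline L τ s s' s'')
    (hsi : ∀ ℓ, ℓ < L → s (τ ℓ) = β ℓ) :
    (∀ f f' f'', Admissible (τ 0) (τ (L - 1)) f f' f'' →
        (∀ ℓ, ℓ < L → f (τ ℓ) = β ℓ) →
        (∫ t in (τ 0)..(τ (L - 1)), (s'' t) ^ 2) ≤ ∫ t in (τ 0)..(τ (L - 1)), (f'' t) ^ 2) ∧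
    (∀ f f' f'', Admissible (τ 0) (τ (L - 1)) f f' f'' →
        (∀ ℓ, ℓ < L → f (τ ℓ) = β ℓ) →
        (∫ t in (τ 0)..(τ (L - 1)), (f'' t) ^ 2) = (∫ t in (τ 0)..(τ (L - 1)), (s'' t) ^ 2) →
        ∀ t ∈ Icc (τ 0) (τ (L - 1)), f t = s t) := by
  obtain ⟨hsd, hsd', hs''c, hpoly, hs''a0, hs''b0⟩ := hs
  have hmono : ∀ i j : ℕ, i ≤ j → j ≤ L - 1 → τ i ≤ τ j := by
    intro i j hij hjL
    induction j with
    | zero => have : i = 0 := by omega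
              rw [this]
    | succ n ih =>
      rcases Nat.lt_or_ge i (n + 1) with h | h
      · exact (ih (by omega) (by omega)).trans (hτ n (by omega)).le
      · have : i = n + 1 := by omega
        rw [this]
  have hτmem : ∀ ℓ, ℓ ≤ L - 1 → τ ℓ ∈ Icc (τ 0) (τ (L - 1)) :=
    fun ℓ h => ⟨hmono 0 ℓ (Nat.zero_le _) h, hmono ℓ (L - 1) h le_rfl⟩
  have hab : τ 0 < τ (L - 1) := by
    have h2 := hτ (L - 2) (by omega)
    have h3 : L - 2 + 1 = L - 1 := by omega
    rw [h3] at h2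
    exact lt_of_le_of_lt (hmono 0 (L - 2) (Nat.zero_le _) (by omega)) h2
  have hab' : τ 0 ≤ τ (L - 1) := hab.le
  haveI : Fact ((volume : Measure ℝ) (Icc (τ 0) (τ (L - 1))) < ⊤) :=
    ⟨(isCompact_Icc).measure_lt_top⟩
  have hs'c : ContinuousOn s' (Icc (τ 0) (τ (L - 1))) :=
    fun t ht => (hsd' t ht).continuousAt.continuousWithinAt
  have hs''Icc : IntegrableOn s'' (Icc (τ 0) (τ (L - 1))) := hs''c.integrableOn_Icc
  have hs''Ioc : IntegrableOn s'' (Ioc (τ 0) (τ (L - 1))) := hs''Icc.mono_set Ioc_subset_Icc_self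
  have hsprim : ∀ t ∈ Icc (τ 0) (τ (L - 1)), s' t = s' (τ 0) + ∫ u in (τ 0)..t, s'' u := by
    intro t ht
    have hsub : uIcc (τ 0) t ⊆ Icc (τ 0) (τ (L - 1)) := by
      rw [uIcc_of_le ht.1]; exact Icc_subset_Icc le_rfl ht.2
    have h := intervalIntegral.integral_eq_sub_of_hasDerivAt
      (fun u hu => hsd' u (hsub hu)) ((hs''c.mono hsub).intervalIntegrable)
    rw [h]; ring
  -- key identity
  have key : ∀ f f' f'' : ℝ → ℝ, Admissible (τ 0) (τ (L - 1)) f f' f'' →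
      (∀ ℓ, ℓ < L → f (τ ℓ) = β ℓ) →
      ((∫ t in (τ 0)..(τ (L - 1)), (f'' t) ^ 2) = (∫ t in (τ 0)..(τ (L - 1)), (s'' t) ^ 2)
        + ∫ t in Ioc (τ 0) (τ (L - 1)), (f'' t - s'' t) ^ 2)
      ∧ IntegrableOn (fun t => (f'' t - s'' t) ^ 2) (Ioc (τ 0) (τ (L - 1))) := by
    intro f f' f'' hA hfi
    obtain ⟨hfc, hf'c, hfd, hfprim, hfL2⟩ := hA
    have hf''Icc : IntegrableOn f'' (Icc (τ 0) (τ (L - 1))) := hfL2.integrable one_le_two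
    have hf''Ioc : IntegrableOn f'' (Ioc (τ 0) (τ (L - 1))) :=
      hf''Icc.mono_set Ioc_subset_Icc_self
    have hg''Ioc : IntegrableOn (fun t => f'' t - s'' t) (Ioc (τ 0) (τ (L - 1))) :=
      hf''Ioc.sub hs''Ioc
    have hgd : ∀ t ∈ Icc (τ 0) (τ (L - 1)), HasDerivAt (fun x => f x - s x) (f' t - s' t) t :=
      fun t ht => (hfd t ht).sub (hsd t ht)
    have hg'c : ContinuousOn (fun t => f' t - s' t) (Icc (τ 0) (τ (L - 1))) := hf'c.sub hs'c
    have hg'prim : ∀ t ∈ Icc (τ 0) (τ (L - 1)),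
        (fun x => f' x - s' x) t = (fun x => f' x - s' x) (τ 0)
          + ∫ u in (τ 0)..t, (f'' u - s'' u) := by
      intro t ht
      have hsub : uIcc (τ 0) t ⊆ Icc (τ 0) (τ (L - 1)) := by
        rw [uIcc_of_le ht.1]; exact Icc_subset_Icc le_rfl ht.2
      have hfII : IntervalIntegrable f'' volume (τ 0) t := by
        rw [intervalIntegrable_iff_integrableOn_Ioc_of_le ht.1]
        exact hf''Ioc.mono_set (Ioc_subset_Ioc le_rfl ht.2)
      have hsII : IntervalIntegrable s'' volume (τ 0) t := (hs''c.mono hsub).intervalIntegrable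
      rw [intervalIntegral.integral_sub hfII hsII]
      have h1 := hfprim t ht
      have h2 := hsprim t ht
      dsimp only
      rw [h1, h2]; ring
    have hg0 : ∀ ℓ, ℓ ≤ L - 1 → f (τ ℓ) - s (τ ℓ) = 0 := by
      intro ℓ h
      rw [hfi ℓ (by omega), hsi ℓ (by omega)]; ring
    have horth : (∫ t in (τ 0)..(τ (L - 1)), s'' t * (f'' t - s'' t)) = 0 := by
      have hii : ∀ ℓ, ℓ < L - 1 → IntervalIntegrable (fun t => s'' t * (f'' t - s'' t))
          volume (τ ℓ) (τ (ℓ + 1)) := by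
        intro ℓ hℓ
        have h1 := hτmem ℓ (by omega)
        have h2 := hτmem (ℓ + 1) (by omega)
        rw [intervalIntegrable_iff_integrableOn_Ioc_of_le (hτ ℓ hℓ).le]
        exact (bddMul hs''c hg''Ioc).mono_set (Ioc_subset_Ioc h1.1 h2.2)
      have hsum := intervalIntegral.sum_integral_adjacent_intervals (μ := volume)
        (a := τ) (n := L - 1) hii
      rw [← hsum]
      have hterm : ∀ ℓ ∈ Finset.range (L - 1),
          (∫ t in (τ ℓ)..(τ (ℓ + 1)), s'' t * (f'' t - s'' t))
          = s'' (τ (ℓ + 1)) * (f' (τ (ℓ + 1)) - s' (τ (ℓ + 1)))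
            - s'' (τ ℓ) * (f' (τ ℓ) - s' (τ ℓ)) := by
        intro ℓ hℓ'
        have hℓ := Finset.mem_range.mp hℓ'
        obtain ⟨p, hp3, hpe⟩ := hpoly ℓ hℓ
        have hcd := hτ ℓ hℓ
        have hmem1 := hτmem ℓ (by omega)
        have hmem2 := hτmem (ℓ + 1) (by omega)
        have hsub : Icc (τ ℓ) (τ (ℓ + 1)) ⊆ Icc (τ 0) (τ (L - 1)) :=
          Icc_subset_Icc hmem1.1 hmem2.2
        have haff := spline_affine hcd hp3 (fun t ht => hsd t (hsub ht))
          (fun t ht => hsd' t (hsub ht)) hpe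
        have hcongr : (∫ t in (τ ℓ)..(τ (ℓ + 1)), s'' t * (f'' t - s'' t))
            = ∫ t in (τ ℓ)..(τ (ℓ + 1)),
                ((p.derivative.derivative).coeff 0 + (p.derivative.derivative).coeff 1 * t)
                  * (f'' t - s'' t) := by
          apply intervalIntegral.integral_congr
          intro t ht
          rw [uIcc_of_le hcd.le] at ht
          dsimp only
          rw [haff t ht]
        have hparts : (∫ t in (τ ℓ)..(τ (ℓ + 1)),
              ((p.derivative.derivative).coeff 0 + (p.derivative.derivative).coeff 1 * t)
                * (f'' t - s'' t))
            = ((p.derivative.derivative).coeff 0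
                + (p.derivative.derivative).coeff 1 * τ (ℓ + 1)) * (f' (τ (ℓ + 1)) - s' (τ (ℓ + 1)))
              - ((p.derivative.derivative).coeff 0
                + (p.derivative.derivative).coeff 1 * τ ℓ) * (f' (τ ℓ) - s' (τ ℓ))
              - (p.derivative.derivative).coeff 1
                * ((f (τ (ℓ + 1)) - s (τ (ℓ + 1))) - (f (τ ℓ) - s (τ ℓ))) :=
          parts hmem1.1 hcd.le hmem2.2 hgd hg'c hg'prim hg''Ioc
        rw [hcongr, hparts, ← haff (τ ℓ) (left_mem_Icc.mpr hcd.le),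
          ← haff (τ (ℓ + 1)) (right_mem_Icc.mpr hcd.le),
          hg0 ℓ (by omega), hg0 (ℓ + 1) (by omega)]
        ring
      rw [Finset.sum_congr rfl hterm,
        Finset.sum_range_sub (f := fun ℓ => s'' (τ ℓ) * (f' (τ ℓ) - s' (τ ℓ)))]
      rw [hs''a0, hs''b0]
      ring
    have hf2Icc : IntegrableOn (fun t => (f'' t) ^ 2) (Icc (τ 0) (τ (L - 1))) :=
      hfL2.integrable_sq
    have hf2Ioc : IntegrableOn (fun t => (f'' t) ^ 2) (Ioc (τ 0) (τ (L - 1))) :=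
      hf2Icc.mono_set Ioc_subset_Icc_self
    have hs2Ioc : IntegrableOn (fun t => (s'' t) ^ 2) (Ioc (τ 0) (τ (L - 1))) :=
      ((hs''c.pow 2).integrableOn_Icc).mono_set Ioc_subset_Icc_self
    have hmixIoc : IntegrableOn (fun t => s'' t * (f'' t - s'' t)) (Ioc (τ 0) (τ (L - 1))) :=
      bddMul hs''c hg''Ioc
    have hg2Ioc : IntegrableOn (fun t => (f'' t - s'' t) ^ 2) (Ioc (τ 0) (τ (L - 1))) := by
      have hfun : (fun t => (f'' t - s'' t) ^ 2)
          = fun t => ((f'' t) ^ 2 - 2 * (s'' t * (f'' t - s'' t))) - (s'' t) ^ 2 := by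
        ext t; ring
      rw [hfun]
      exact (hf2Ioc.sub (hmixIoc.const_mul 2)).sub hs2Ioc
    refine ⟨?_, hg2Ioc⟩
    rw [intervalIntegral.integral_of_le hab'] at horth
    rw [intervalIntegral.integral_of_le hab', intervalIntegral.integral_of_le hab']
    have hcongr2 : (∫ t in Ioc (τ 0) (τ (L - 1)), (f'' t) ^ 2)
        = ∫ t in Ioc (τ 0) (τ (L - 1)),
            (((s'' t) ^ 2 + 2 * (s'' t * (f'' t - s'' t))) + (f'' t - s'' t) ^ 2) := by
      apply setIntegral_congr_fun measurableSet_Ioc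
      intro t _
      ring
    have hmix2 : IntegrableOn (fun t => 2 * (s'' t * (f'' t - s'' t)))
        (Ioc (τ 0) (τ (L - 1))) := hmixIoc.const_mul 2
    have hsum1 : IntegrableOn (fun t => (s'' t) ^ 2 + 2 * (s'' t * (f'' t - s'' t)))
        (Ioc (τ 0) (τ (L - 1))) := hs2Ioc.add hmix2
    rw [hcongr2, integral_add hsum1 hg2Ioc, integral_add hs2Ioc hmix2,
      integral_const_mul, horth]
    ring
  constructor
  · intro f f' f'' hA hfi
    have hk := (key f f' f'' hA hfi).1
    have hpos : 0 ≤ ∫ t in Ioc (τ 0) (τ (L - 1)), (f'' t - s'' t) ^ 2 :=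
      setIntegral_nonneg measurableSet_Ioc (fun x _ => sq_nonneg _)
    linarith
  · intro f f' f'' hA hfi heq
    obtain ⟨hk, hg2Ioc⟩ := key f f' f'' hA hfi
    have hzero : (∫ t in Ioc (τ 0) (τ (L - 1)), (f'' t - s'' t) ^ 2) = 0 := by linarith
    obtain ⟨hfc, hf'c, hfd, hfprim, hfL2⟩ := hA
    have hf''Icc : IntegrableOn f'' (Icc (τ 0) (τ (L - 1))) := hfL2.integrable one_le_two
    have hf''Ioc : IntegrableOn f'' (Ioc (τ 0) (τ (L - 1))) :=
      hf''Icc.mono_set Ioc_subset_Icc_self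
    have hae : (fun t => (f'' t - s'' t) ^ 2)
        =ᵐ[volume.restrict (Ioc (τ 0) (τ (L - 1)))] 0 :=
      (integral_eq_zero_iff_of_nonneg (fun t => sq_nonneg _) hg2Ioc).mp hzero
    have hae0 : (fun t => f'' t - s'' t) =ᵐ[volume.restrict (Ioc (τ 0) (τ (L - 1)))] 0 :=
      hae.mono (fun x hx => by
        have : (f'' x - s'' x) ^ 2 = 0 := hx
        have := pow_eq_zero_iff (n := 2) (by norm_num) |>.mp this
        simpa using this)
    have hint0 : ∀ t ∈ Icc (τ 0) (τ (L - 1)), (∫ u in (τ 0)..t, (f'' u - s'' u)) = 0 := by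
      intro t ht
      rw [intervalIntegral.integral_of_le ht.1]
      have h := ae_restrict_of_ae_restrict_of_subset (Ioc_subset_Ioc le_rfl ht.2) hae0
      calc (∫ u in Ioc (τ 0) t, (f'' u - s'' u))
          = ∫ u in Ioc (τ 0) t, (0 : ℝ) := integral_congr_ae h
        _ = 0 := integral_zero _ _
    have hg'const : ∀ t ∈ Icc (τ 0) (τ (L - 1)), f' t - s' t = f' (τ 0) - s' (τ 0) := by
      intro t ht
      have h1 := hfprim t ht
      have h2 := hsprim t ht
      have h3 : (∫ u in (τ 0)..t, f'' u) - (∫ u in (τ 0)..t, s'' u) = 0 := by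
        have hsub : uIcc (τ 0) t ⊆ Icc (τ 0) (τ (L - 1)) := by
          rw [uIcc_of_le ht.1]; exact Icc_subset_Icc le_rfl ht.2
        have hfII : IntervalIntegrable f'' volume (τ 0) t := by
          rw [intervalIntegrable_iff_integrableOn_Ioc_of_le ht.1]
          exact hf''Ioc.mono_set (Ioc_subset_Ioc le_rfl ht.2)
        have hsII : IntervalIntegrable s'' volume (τ 0) t := (hs''c.mono hsub).intervalIntegrable
        rw [← intervalIntegral.integral_sub hfII hsII]
        exact hint0 t ht
      rw [h1, h2]
      linarith
    have hgd : ∀ t ∈ Icc (τ 0) (τ (L - 1)), HasDerivAt (fun x => f x - s x) (f' t - s' t) t :=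
      fun t ht => (hfd t ht).sub (hsd t ht)
    have hg'c : ContinuousOn (fun t => f' t - s' t) (Icc (τ 0) (τ (L - 1))) := hf'c.sub hs'c
    have hgFTC : ∀ t ∈ Icc (τ 0) (τ (L - 1)),
        (f t - s t) - (f (τ 0) - s (τ 0)) = (f' (τ 0) - s' (τ 0)) * (t - τ 0) := by
      intro t ht
      have hsub : uIcc (τ 0) t ⊆ Icc (τ 0) (τ (L - 1)) := by
        rw [uIcc_of_le ht.1]; exact Icc_subset_Icc le_rfl ht.2
      have h1 : (∫ u in (τ 0)..t, (f' u - s' u)) = (f t - s t) - (f (τ 0) - s (τ 0)) :=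
        intervalIntegral.integral_eq_sub_of_hasDerivAt (fun u hu => hgd u (hsub hu))
          ((hg'c.mono hsub).intervalIntegrable)
      have h2 : (∫ u in (τ 0)..t, (f' u - s' u)) = ∫ u in (τ 0)..t, (f' (τ 0) - s' (τ 0)) := by
        apply intervalIntegral.integral_congr
        intro u hu
        exact hg'const u (hsub hu)
      rw [intervalIntegral.integral_const, smul_eq_mul] at h2
      rw [← h1, h2]
      ring
    have hga : f (τ 0) - s (τ 0) = 0 := by
      rw [hfi 0 (by omega), hsi 0 (by omega)]; ring
    have hgb : f (τ (L - 1)) - s (τ (L - 1)) = 0 := by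
      rw [hfi (L - 1) (by omega), hsi (L - 1) (by omega)]; ring
    have hm0 : f' (τ 0) - s' (τ 0) = 0 := by
      have h := hgFTC (τ (L - 1)) (right_mem_Icc.mpr hab')
      rw [hga, hgb] at h
      have hba : τ (L - 1) - τ 0 ≠ 0 := sub_ne_zero.mpr hab.ne'
      have h2 : (f' (τ 0) - s' (τ 0)) * (τ (L - 1) - τ 0) = 0 := by linarith
      rcases mul_eq_zero.mp h2 with h' | h'
      · exact h'
      · exact absurd h' hba
    intro t ht
    have h := hgFTC t ht
    rw [hga, hm0] at h
    have : f t - s t = 0 := by linarith [h]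
    linarith
end

section
/- Let τ_1 < ... < τ_L be points in [a,b] and β_1, ..., β_L ∈ ℝ. Among all continuous piecewise-C¹ functions f on [a,b] with f' of bounded variation and f(τ_ℓ) = β_ℓ for all ℓ, the continuous piecewise linear interpolant with knots at the τ_ℓ (extended constantly outside [τ_1, τ_L]) achieves total variation of f' equal to Σ_{ℓ=1}^{L-2} |s_{ℓ+1} - s_ℓ| where s_ℓ = (β_{ℓ+1} - β_ℓ)/(τ_{ℓ+1} - τ_ℓ), and no interpolant achieves smaller total variation of its derivative. -/
open Set Finset

lemma crossing_aux (s y : ℕ → ℝ) :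
    ∀ k : ℕ, (∀ ℓ ≤ k, min (y (2*ℓ)) (y (2*ℓ+1)) ≤ s ℓ ∧ s ℓ ≤ max (y (2*ℓ)) (y (2*ℓ+1))) →
    (∑ ℓ ∈ Finset.range k, |s (ℓ+1) - s ℓ|) + |y (2*k+1) - s k| ≤
      ∑ j ∈ Finset.range (2*k+1), |y (j+1) - y j| := by
  intro k
  induction k with
  | zero =>
    intro h
    have h1 : min (y 0) (y 1) ≤ s 0 := (h 0 le_rfl).1
    have h2 : s 0 ≤ max (y 0) (y 1) := (h 0 le_rfl).2
    show (∑ ℓ ∈ Finset.range 0, |s (ℓ+1) - s ℓ|) + |y 1 - s 0| ≤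
      ∑ j ∈ Finset.range 1, |y (j+1) - y j|
    rw [Finset.sum_range_zero, Finset.sum_range_one, zero_add]
    show |y 1 - s 0| ≤ |y (0+1) - y 0|
    rcases le_total (y 0) (y 1) with hy | hy
    · rw [min_eq_left hy] at h1; rw [max_eq_right hy] at h2
      rw [show (0+1 : ℕ) = 1 from rfl, abs_of_nonneg (by linarith), abs_of_nonneg (by linarith)]
      linarith
    · rw [min_eq_right hy] at h1; rw [max_eq_left hy] at h2
      rw [show (0+1 : ℕ) = 1 from rfl, abs_of_nonpos (by linarith), abs_of_nonpos (by linarith)]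
      linarith
  | succ k ih =>
    intro h
    have hk := ih (fun ℓ hℓ => h ℓ (hℓ.trans (Nat.le_succ k)))
    have hstr := h (k+1) le_rfl
    have e1 : 2*(k+1) = 2*k+2 := by ring
    have e2 : 2*(k+1)+1 = 2*k+2+1 := by ring
    rw [e1] at hstr
    show (∑ ℓ ∈ Finset.range (k+1), |s (ℓ+1) - s ℓ|) + |y (2*(k+1)+1) - s (k+1)| ≤
      ∑ j ∈ Finset.range (2*(k+1)+1), |y (j+1) - y j|
    rw [e1, Finset.sum_range_succ]
    have e3 : 2*k+2 = (2*k+1)+1 := by ring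
    rw [e3, Finset.sum_range_succ, Finset.sum_range_succ]
    have h1 : |y (2*k+1+1+1) - s (k+1)| + |s (k+1) - y (2*k+1+1)| = |y (2*k+1+1+1) - y (2*k+1+1)| := by
      have e4 : 2*k+1+1 = 2*k+2 := by ring
      rw [e4]
      rcases le_total (y (2*k+2)) (y (2*k+2+1)) with hy | hy
      · rw [min_eq_left hy] at hstr; rw [max_eq_right hy] at hstr
        rw [abs_of_nonneg (by linarith [hstr.1, hstr.2]),
          abs_of_nonneg (by linarith [hstr.1, hstr.2]),
          abs_of_nonneg (by linarith)]
        ring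
      · rw [min_eq_right hy] at hstr; rw [max_eq_left hy] at hstr
        rw [abs_of_nonpos (by linarith [hstr.1, hstr.2]),
          abs_of_nonpos (by linarith [hstr.1, hstr.2]),
          abs_of_nonpos (by linarith)]
        ring
    have h2 : |s (k+1) - s k| ≤ |s (k+1) - y (2*k+1+1)| + |y (2*k+1+1) - y (2*k+1)| + |y (2*k+1) - s k| := by
      calc |s (k+1) - s k| ≤ |s (k+1) - y (2*k+1+1)| + |y (2*k+1+1) - s k| := abs_sub_le _ _ _
        _ ≤ |s (k+1) - y (2*k+1+1)| + (|y (2*k+1+1) - y (2*k+1)| + |y (2*k+1) - s k|) := by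
            gcongr; exact abs_sub_le _ _ _
        _ = _ := by ring
    linarith [hk]

/-- Strict increase from positive derivative off a finite exceptional set. -/
lemma mono_aux (P : Finset ℝ) : ∀ (f g : ℝ → ℝ) (a b : ℝ), a < b →
    ContinuousOn f (Set.Icc a b) →
    (∀ x ∈ Set.Ioo a b \ (P : Set ℝ), HasDerivAt f (g x) x ∧ 0 < g x) →
    f a < f b := by
  induction P using Finset.induction_on with
  | empty =>
    intro f g a b hab hc hd
    have hmono : StrictMonoOn f (Set.Icc a b) := by
      apply strictMonoOn_of_deriv_pos (convex_Icc a b) hc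
      intro x hx
      rw [interior_Icc] at hx
      obtain ⟨hder, hpos⟩ := hd x (by simpa using hx)
      rw [hder.deriv]; exact hpos
    exact hmono ⟨le_rfl, hab.le⟩ ⟨hab.le, le_rfl⟩ hab
  | @insert c Q hc ih =>
    intro f g a b hab hcont hd
    by_cases hmem : c ∈ Set.Ioo a b
    · have h1 : f a < f c := by
        apply ih f g a c hmem.1 (hcont.mono (Set.Icc_subset_Icc le_rfl hmem.2.le))
        intro x hx
        refine hd x ⟨⟨hx.1.1, hx.1.2.trans hmem.2⟩, ?_⟩
        simp only [Finset.coe_insert, Set.mem_insert_iff, not_or]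
        exact ⟨ne_of_lt hx.1.2, hx.2⟩
      have h2 : f c < f b := by
        apply ih f g c b hmem.2 (hcont.mono (Set.Icc_subset_Icc hmem.1.le le_rfl))
        intro x hx
        refine hd x ⟨⟨hmem.1.trans hx.1.1, hx.1.2⟩, ?_⟩
        simp only [Finset.coe_insert, Set.mem_insert_iff, not_or]
        exact ⟨(ne_of_lt hx.1.1).symm, hx.2⟩
      linarith
    · apply ih f g a b hab hcont
      intro x hx
      refine hd x ⟨hx.1, ?_⟩
      simp only [Finset.coe_insert, Set.mem_insert_iff, not_or]
      refine ⟨?_, hx.2⟩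
      rintro rfl; exact hmem hx.1

/-- Variation of a function constant on `Ico a b` over `Icc a b`. -/
lemma evar_step {f : ℝ → ℝ} {a b c : ℝ} (hab : a < b) (h : ∀ x ∈ Set.Ico a b, f x = c) :
    eVariationOn f (Set.Icc a b) = edist (f b) c := by
  classical
  refine le_antisymm ?_ ?_
  · apply iSup_le
    rintro ⟨n, u, hu, us⟩
    dsimp only
    have key : ∀ i, edist (f (u (i+1))) (f (u i)) ≤
        if u i ≠ b ∧ u (i+1) = b then edist (f b) c else 0 := by
      intro i
      by_cases h2 : u (i+1) = b
      · by_cases h1 : u i = b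
        · simp [h1, h2]
        · have hlt : u i < b := lt_of_le_of_ne (us i).2 h1
          rw [if_pos ⟨h1, h2⟩, h2, h (u i) ⟨(us i).1, hlt⟩]
      · have hib : u (i+1) < b := lt_of_le_of_ne (us (i+1)).2 h2
        have hib' : u i < b := lt_of_le_of_lt (hu (Nat.le_succ i)) hib
        rw [h (u (i+1)) ⟨(us (i+1)).1, hib⟩, h (u i) ⟨(us i).1, hib'⟩]
        simp [h2]
    calc ∑ i ∈ Finset.range n, edist (f (u (i+1))) (f (u i))
        ≤ ∑ i ∈ Finset.range n, (if u i ≠ b ∧ u (i+1) = b then edist (f b) c else 0) :=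
          Finset.sum_le_sum (fun i _ => key i)
      _ = ∑ i ∈ (Finset.range n).filter (fun i => u i ≠ b ∧ u (i+1) = b), edist (f b) c :=
          (Finset.sum_filter _ _).symm
      _ = ((Finset.range n).filter (fun i => u i ≠ b ∧ u (i+1) = b)).card • edist (f b) c :=
          Finset.sum_const _
      _ ≤ 1 • edist (f b) c := by
          have hcard : ((Finset.range n).filter (fun i => u i ≠ b ∧ u (i+1) = b)).card ≤ 1 := by
            apply Finset.card_le_one.2
            intro i hi j hj
            simp only [Finset.mem_filter] at hi hj
            by_contra hne
            rcases Nat.lt_or_ge i j with hij | hij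
            · have : u (i+1) ≤ u j := hu hij
              rw [hi.2.2] at this
              exact hj.2.1 (le_antisymm (us j).2 this)
            · have hij' : j < i := lt_of_le_of_ne hij (fun h' => hne h'.symm)
              have : u (j+1) ≤ u i := hu hij'
              rw [hj.2.2] at this
              exact hi.2.1 (le_antisymm (us i).2 this)
          rw [nsmul_eq_mul, nsmul_eq_mul]
          exact mul_le_mul_left (by exact_mod_cast hcard) _
      _ = edist (f b) c := one_nsmul _
  · have h1 := eVariationOn.edist_le f (x := b) (y := a)
      (Set.mem_Icc.2 ⟨hab.le, le_rfl⟩) (Set.mem_Icc.2 ⟨le_rfl, hab.le⟩)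
    rwa [h a ⟨le_rfl, hab⟩] at h1

/-- Minimality of the linear spline interpolant (Pinkus; Koenker et al.): among continuous
piecewise-C¹ functions f with derivative of bounded variation interpolating β_ℓ at the knots
τ_ℓ, the piecewise linear interpolant achieves total variation of the derivative equal to
Σ_ℓ |s_{ℓ+1} - s_ℓ| with s_ℓ = (β_{ℓ+1} - β_ℓ)/(τ_{ℓ+1} - τ_ℓ), and no interpolant achieves a
smaller total variation of its derivative. -/
theorem stmt13 (L : ℕ) (hL : 2 ≤ L) (τ β s : ℕ → ℝ)
    (hτ : ∀ ℓ, ℓ < L - 1 → τ ℓ < τ (ℓ + 1))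
    (hs : ∀ ℓ, ℓ < L - 1 → s ℓ = (β (ℓ + 1) - β ℓ) / (τ (ℓ + 1) - τ ℓ))
    -- pl is the continuous piecewise linear interpolant and g₀ its (piecewise constant)
    -- derivative
    (pl g₀ : ℝ → ℝ)
    (hpl : ∀ ℓ, ℓ < L - 1 → ∀ x ∈ Set.Icc (τ ℓ) (τ (ℓ + 1)),
      pl x = β ℓ + s ℓ * (x - τ ℓ))
    (hg₀ : ∀ ℓ, ℓ < L - 1 → ∀ x ∈ Set.Ico (τ ℓ) (τ (ℓ + 1)), g₀ x = s ℓ)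
    (hg₀b : g₀ (τ (L - 1)) = s (L - 2)) :
    eVariationOn g₀ (Set.Icc (τ 0) (τ (L - 1))) =
      ∑ ℓ ∈ Finset.range (L - 2), ENNReal.ofReal |s (ℓ + 1) - s ℓ| ∧
    (∀ (f g : ℝ → ℝ) (P : Finset ℝ),
      ContinuousOn f (Set.Icc (τ 0) (τ (L - 1))) →
      (∀ x ∈ Set.Ioo (τ 0) (τ (L - 1)) \ (P : Set ℝ), HasDerivAt f (g x) x) →
      ContinuousOn g (Set.Icc (τ 0) (τ (L - 1)) \ (P : Set ℝ)) →
      BoundedVariationOn g (Set.Icc (τ 0) (τ (L - 1))) →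
      (∀ ℓ, ℓ < L → f (τ ℓ) = β ℓ) →
      (∑ ℓ ∈ Finset.range (L - 2), ENNReal.ofReal |s (ℓ + 1) - s ℓ|) ≤
        eVariationOn g (Set.Icc (τ 0) (τ (L - 1)))) := by
  classical
  obtain ⟨K, rfl⟩ : ∃ K, L = K + 2 := ⟨L - 2, by omega⟩
  have eL1 : K + 2 - 1 = K + 1 := by omega
  have eL2 : K + 2 - 2 = K := by omega
  rw [eL1] at hτ hs hpl hg₀ hg₀b
  rw [eL2] at hg₀b
  rw [eL1, eL2]
  have τlt : ∀ j i, i < j → j ≤ K + 1 → τ i < τ j := by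
    intro j
    induction j with
    | zero => intro i h _; omega
    | succ n ihn =>
      intro i hij hj
      rcases Nat.lt_or_ge i n with h' | h'
      · exact (ihn i h' (by omega)).trans (hτ n (by omega))
      · have hin : i = n := by omega
        subst hin
        exact hτ i (by omega)
  have τle : ∀ i j, i ≤ j → j ≤ K + 1 → τ i ≤ τ j := by
    intro i j hij hj
    rcases eq_or_lt_of_le hij with rfl | h'
    · exact le_rfl
    · exact (τlt j i h' hj).le
  constructor
  · -- Part 1: exact value of the variation of g₀
    have block : ∀ ℓ, ℓ < K → eVariationOn g₀ (Set.Icc (τ ℓ) (τ (ℓ+1))) =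
        ENNReal.ofReal |s (ℓ+1) - s ℓ| := by
      intro ℓ hℓ
      have hab : τ ℓ < τ (ℓ+1) := hτ ℓ (by omega)
      rw [evar_step hab (hg₀ ℓ (by omega))]
      have hval : g₀ (τ (ℓ+1)) = s (ℓ+1) :=
        hg₀ (ℓ+1) (by omega) (τ (ℓ+1)) ⟨le_rfl, hτ (ℓ+1) (by omega)⟩
      rw [hval, edist_dist, Real.dist_eq]
    have lastblock : eVariationOn g₀ (Set.Icc (τ K) (τ (K+1))) = 0 := by
      apply eVariationOn.constant_on
      have hconst : ∀ x ∈ Set.Icc (τ K) (τ (K+1)), g₀ x = s K := by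
        intro x hx
        rcases lt_or_eq_of_le hx.2 with h' | h'
        · exact hg₀ K (by omega) x ⟨hx.1, h'⟩
        · rw [h']; exact hg₀b
      intro x hx y hy
      obtain ⟨x', hx', rfl⟩ := hx
      obtain ⟨y', hy', rfl⟩ := hy
      rw [hconst x' hx', hconst y' hy']
    have cum : ∀ n, n ≤ K → eVariationOn g₀ (Set.Icc (τ 0) (τ n)) =
        ∑ ℓ ∈ Finset.range n, ENNReal.ofReal |s (ℓ+1) - s ℓ| := by
      intro n
      induction n with
      | zero =>
        intro _
        rw [Finset.sum_range_zero]
        apply eVariationOn.subsingleton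
        rw [Set.Icc_self]
        exact Set.subsingleton_singleton
      | succ n ihn =>
        intro hn
        have h1 : τ 0 ≤ τ n := τle 0 n (by omega) (by omega)
        have h2 : τ n ≤ τ (n+1) := (hτ n (by omega)).le
        have hadd := eVariationOn.Icc_add_Icc (s := (Set.univ : Set ℝ)) g₀ h1 h2 (Set.mem_univ _)
        simp only [Set.univ_inter] at hadd
        rw [← hadd, ihn (by omega), block n (by omega), Finset.sum_range_succ]
    have h1 : τ 0 ≤ τ K := τle 0 K (by omega) (by omega)
    have h2 : τ K ≤ τ (K+1) := (hτ K (by omega)).le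
    have hadd := eVariationOn.Icc_add_Icc (s := (Set.univ : Set ℝ)) g₀ h1 h2 (Set.mem_univ _)
    simp only [Set.univ_inter] at hadd
    rw [← hadd, cum K le_rfl, lastblock, add_zero]
  · -- Part 2: minimality
    intro f g P hfc hfd hgc hgbv hinterp
    have slope : ∀ ℓ, ℓ ≤ K → f (τ (ℓ+1)) - f (τ ℓ) = s ℓ * (τ (ℓ+1) - τ ℓ) := by
      intro ℓ hℓ
      have hab : τ ℓ < τ (ℓ+1) := hτ ℓ (by omega)
      rw [hinterp (ℓ+1) (by omega), hinterp ℓ (by omega), hs ℓ (by omega),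
        div_mul_cancel₀ _ (ne_of_gt (sub_pos.2 hab))]
    have key : ∀ ℓ, ℓ ≤ K → ∃ p q : ℝ, τ ℓ < p ∧ p ≤ q ∧ q < τ (ℓ+1) ∧
        min (g p) (g q) ≤ s ℓ ∧ s ℓ ≤ max (g p) (g q) := by
      intro ℓ hℓ
      have hab : τ ℓ < τ (ℓ+1) := hτ ℓ (by omega)
      have hsub : Set.Icc (τ ℓ) (τ (ℓ+1)) ⊆ Set.Icc (τ 0) (τ (K+1)) :=
        Set.Icc_subset_Icc (τle 0 ℓ (by omega) (by omega)) (τle (ℓ+1) (K+1) (by omega) (by omega))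
      have hsubo : Set.Ioo (τ ℓ) (τ (ℓ+1)) ⊆ Set.Ioo (τ 0) (τ (K+1)) :=
        Set.Ioo_subset_Ioo (τle 0 ℓ (by omega) (by omega)) (τle (ℓ+1) (K+1) (by omega) (by omega))
      have hv : ∃ v, v ∈ Set.Ioo (τ ℓ) (τ (ℓ+1)) \ (P : Set ℝ) ∧ s ℓ ≤ g v := by
        by_contra hcon
        push_neg at hcon
        have hm := mono_aux P (fun x => s ℓ * x - f x) (fun x => s ℓ - g x)
          (τ ℓ) (τ (ℓ+1)) hab
          ((continuousOn_const.mul continuousOn_id).sub (hfc.mono hsub))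
          (by
            intro x hx
            have hd := hfd x ⟨hsubo hx.1, hx.2⟩
            refine ⟨?_, ?_⟩
            · exact (((hasDerivAt_id x).const_mul (s ℓ)).sub hd).congr_deriv (by simp)
            · have := hcon x hx
              show 0 < s ℓ - g x
              linarith)
        have hsl := slope ℓ hℓ
        linarith
      have hu : ∃ v, v ∈ Set.Ioo (τ ℓ) (τ (ℓ+1)) \ (P : Set ℝ) ∧ g v ≤ s ℓ := by
        by_contra hcon
        push_neg at hcon
        have hm := mono_aux P (fun x => f x - s ℓ * x) (fun x => g x - s ℓ)
          (τ ℓ) (τ (ℓ+1)) hab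
          ((hfc.mono hsub).sub (continuousOn_const.mul continuousOn_id))
          (by
            intro x hx
            have hd := hfd x ⟨hsubo hx.1, hx.2⟩
            refine ⟨?_, ?_⟩
            · exact (hd.sub ((hasDerivAt_id x).const_mul (s ℓ))).congr_deriv (by simp)
            · have := hcon x hx
              show 0 < g x - s ℓ
              linarith)
        have hsl := slope ℓ hℓ
        linarith
      obtain ⟨v, hvmem, hv⟩ := hv
      obtain ⟨w, hwmem, hw⟩ := hu
      rcases le_total v w with hvw | hvw
      · exact ⟨v, w, hvmem.1.1, hvw, hwmem.1.2,
          le_trans (min_le_right _ _) hw, le_trans hv (le_max_left _ _)⟩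
      · exact ⟨w, v, hwmem.1.1, hvw, hvmem.1.2,
          le_trans (min_le_left _ _) hw, le_trans hv (le_max_right _ _)⟩
    choose! p q hp hpq hq hmin hmax using key
    set u : ℕ → ℝ :=
      fun j => if j / 2 ≤ K then (if j % 2 = 0 then p (j/2) else q (j/2)) else q K with hudef
    have hu2 : ∀ ℓ, ℓ ≤ K → u (2*ℓ) = p ℓ ∧ u (2*ℓ+1) = q ℓ := by
      intro ℓ hℓ
      have d1 : (2*ℓ) / 2 = ℓ := by omega
      have m1 : (2*ℓ) % 2 = 0 := by omega
      have d2 : (2*ℓ+1) / 2 = ℓ := by omega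
      have m2 : (2*ℓ+1) % 2 = 1 := by omega
      constructor
      · simp [hudef, d1, m1, hℓ]
      · simp [hudef, d2, m2, hℓ]
    have humono : Monotone u := by
      apply monotone_nat_of_le_succ
      intro j
      rcases Nat.even_or_odd j with ⟨m, hm⟩ | ⟨m, hm⟩
      · subst hm
        have d1 : (m+m)/2 = m := by omega
        have m1 : (m+m)%2 = 0 := by omega
        have d2 : (m+m+1)/2 = m := by omega
        have m2 : (m+m+1)%2 = 1 := by omega
        by_cases hmK : m ≤ K
        · simp only [hudef, d1, m1, d2, m2, if_pos hmK]
          simpa using hpq m hmK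
        · simp [hudef, d1, m1, d2, m2, hmK]
      · subst hm
        have d1 : (2*m+1)/2 = m := by omega
        have m1 : (2*m+1)%2 = 1 := by omega
        have d2 : (2*m+1+1)/2 = m+1 := by omega
        have m2 : (2*m+1+1)%2 = 0 := by omega
        by_cases h1 : m + 1 ≤ K
        · have hmK : m ≤ K := by omega
          simp only [hudef, d1, m1, d2, m2, if_pos hmK, if_pos h1]
          simp only [one_ne_zero, if_false, if_pos rfl]
          exact le_of_lt ((hq m hmK).trans (hp (m+1) h1))
        · by_cases hmK : m ≤ K
          · have hmeq : m = K := by omega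
            subst hmeq
            simp [hudef, d1, m1, d2, m2, hmK, h1]
          · simp [hudef, d1, m1, d2, m2, hmK, h1]
    have hpm : ∀ ℓ, ℓ ≤ K →
        p ℓ ∈ Set.Icc (τ 0) (τ (K+1)) ∧ q ℓ ∈ Set.Icc (τ 0) (τ (K+1)) := by
      intro ℓ hℓ
      have h1 : τ 0 ≤ τ ℓ := τle 0 ℓ (by omega) (by omega)
      have h2 : τ (ℓ+1) ≤ τ (K+1) := τle (ℓ+1) (K+1) (by omega) (by omega)
      have hpℓ := hp ℓ hℓ
      have hqℓ := hq ℓ hℓ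
      have hpqℓ := hpq ℓ hℓ
      exact ⟨⟨h1.trans hpℓ.le, (hpqℓ.trans hqℓ.le).trans h2⟩,
        ⟨h1.trans (hpℓ.trans_le hpqℓ).le, hqℓ.le.trans h2⟩⟩
    have humem : ∀ j, u j ∈ Set.Icc (τ 0) (τ (K+1)) := by
      intro j
      by_cases hjK : j / 2 ≤ K
      · by_cases hj2 : j % 2 = 0
        · simpa [hudef, hjK, hj2] using (hpm (j/2) hjK).1
        · simpa [hudef, hjK, hj2] using (hpm (j/2) hjK).2
      · simpa [hudef, hjK] using (hpm K le_rfl).2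
    have hsum := eVariationOn.sum_le (f := g) (n := 2*K+1) humono humem
    have hcross := crossing_aux s (fun j => g (u j)) K (by
      intro ℓ hℓ
      obtain ⟨e1, e2⟩ := hu2 ℓ hℓ
      simp only [e1, e2]
      exact ⟨hmin ℓ hℓ, hmax ℓ hℓ⟩)
    calc ∑ ℓ ∈ Finset.range K, ENNReal.ofReal |s (ℓ+1) - s ℓ|
        = ENNReal.ofReal (∑ ℓ ∈ Finset.range K, |s (ℓ+1) - s ℓ|) :=
          (ENNReal.ofReal_sum_of_nonneg (fun _ _ => abs_nonneg _)).symm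
      _ ≤ ENNReal.ofReal (∑ j ∈ Finset.range (2*K+1), |g (u (j+1)) - g (u j)|) := by
          apply ENNReal.ofReal_le_ofReal
          calc ∑ ℓ ∈ Finset.range K, |s (ℓ+1) - s ℓ|
              ≤ (∑ ℓ ∈ Finset.range K, |s (ℓ+1) - s ℓ|) + |g (u (2*K+1)) - s K| :=
                le_add_of_nonneg_right (abs_nonneg _)
            _ ≤ _ := hcross
      _ = ∑ j ∈ Finset.range (2*K+1), ENNReal.ofReal |g (u (j+1)) - g (u j)| :=
          ENNReal.ofReal_sum_of_nonneg (fun _ _ => abs_nonneg _)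
      _ = ∑ j ∈ Finset.range (2*K+1), edist (g (u (j+1))) (g (u j)) := by
          refine Finset.sum_congr rfl (fun j _ => ?_)
          rw [edist_dist, Real.dist_eq]
      _ ≤ eVariationOn g (Set.Icc (τ 0) (τ (K+1))) := hsum
end
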